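/- Let u, v, m, n : ℝ² × ℝ → ℝ be twice continuously differentiable. (i) If ∂_t m + ∂_y(v m − u n) = −u(∂_x m + ∂_y n) at every point, then A := ∂_x m satisfies ∂_t A + ∂_x(u A − n ∂_y u) + ∂_y(v A + m ∂_x v) = 0 at every point. (ii) If ∂_t n + ∂_x(u n − v m) = −v(∂_x m + ∂_y n) at every point, then B := ∂_y n satisfies ∂_t B + ∂_x(u B + n ∂_y u) + ∂_y(v B − m ∂_x v) = 0 at every point. -/

import Mathlib

/-- Partial derivative in `x` of a function of `(x, y, t) : ℝ × ℝ × ℝ`. -/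
noncomputable def pdx (f : ℝ × ℝ × ℝ → ℝ) (p : ℝ × ℝ × ℝ) : ℝ := fderiv ℝ f p (1, 0, 0)

/-- Partial derivative in `y` of a function of `(x, y, t) : ℝ × ℝ × ℝ`. -/
noncomputable def pdy (f : ℝ × ℝ × ℝ → ℝ) (p : ℝ × ℝ × ℝ) : ℝ := fderiv ℝ f p (0, 1, 0)

/-- Partial derivative in `t` of a function of `(x, y, t) : ℝ × ℝ × ℝ`. -/
noncomputable def pdt (f : ℝ × ℝ × ℝ → ℝ) (p : ℝ × ℝ × ℝ) : ℝ := fderiv ℝ f p (0, 0, 1)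

local notation "E" => ℝ × ℝ × ℝ

private lemma diff_pd {f : E → ℝ} (hf : ContDiff ℝ 2 f) (e : E) :
    Differentiable ℝ (fun q => fderiv ℝ f q e) :=
  ((hf.fderiv_right (m := 1) (by norm_num)).differentiable (by norm_num)).clm_apply (differentiable_const e)

private lemma pd_comm {f : E → ℝ} (hf : ContDiff ℝ 2 f) (p e e' : E) :
    fderiv ℝ (fun q => fderiv ℝ f q e') p e = fderiv ℝ (fun q => fderiv ℝ f q e) p e' := by
  have hda : DifferentiableAt ℝ (fderiv ℝ f) p :=
    ((hf.fderiv_right (m := 1) (by norm_num)).differentiable (by norm_num)) p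
  have key : ∀ w w' : E, fderiv ℝ (fun q => fderiv ℝ f q w) p w'
      = fderiv ℝ (fderiv ℝ f) p w' w := by
    intro w w'
    rw [show (fun q => fderiv ℝ f q w) = (fun q => (fderiv ℝ f q) w) from rfl,
      fderiv_clm_apply hda (differentiableAt_const w)]
    simp
  rw [key, key]
  exact (hf.contDiffAt.isSymmSndFDerivAt (by simp)) e e'

private lemma pd_mul {f g : E → ℝ} {p : E} (hf : DifferentiableAt ℝ f p)
    (hg : DifferentiableAt ℝ g p) (e : E) :
    fderiv ℝ (fun q => f q * g q) p e = fderiv ℝ f p e * g p + f p * fderiv ℝ g p e := by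
  rw [fderiv_fun_mul hf hg]; simp; ring

private lemma pd_add {f g : E → ℝ} {p : E} (hf : DifferentiableAt ℝ f p)
    (hg : DifferentiableAt ℝ g p) (e : E) :
    fderiv ℝ (fun q => f q + g q) p e = fderiv ℝ f p e + fderiv ℝ g p e := by
  rw [fderiv_fun_add hf hg]; simp

private lemma pd_sub {f g : E → ℝ} {p : E} (hf : DifferentiableAt ℝ f p)
    (hg : DifferentiableAt ℝ g p) (e : E) :
    fderiv ℝ (fun q => f q - g q) p e = fderiv ℝ f p e - fderiv ℝ g p e := by
  rw [fderiv_fun_sub hf hg]; simp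

private lemma key (u v m n : E → ℝ)
    (hu : ContDiff ℝ 2 u) (hv : ContDiff ℝ 2 v) (hm : ContDiff ℝ 2 m) (hn : ContDiff ℝ 2 n)
    (ex ey et : E)
    (h : ∀ p : E, fderiv ℝ m p et + fderiv ℝ (fun q => v q * m q - u q * n q) p ey
        = -(u p) * (fderiv ℝ m p ex + fderiv ℝ n p ey)) :
    ∀ p : E, fderiv ℝ (fun q => fderiv ℝ m q ex) p et
        + fderiv ℝ (fun q => u q * fderiv ℝ m q ex - n q * fderiv ℝ u q ey) p ex
        + fderiv ℝ (fun q => v q * fderiv ℝ m q ex + m q * fderiv ℝ v q ex) p ey = 0 := by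
  intro p
  have du := hu.differentiable (by norm_num)
  have dv := hv.differentiable (by norm_num)
  have dm := hm.differentiable (by norm_num)
  have dn := hn.differentiable (by norm_num)
  have h' : ∀ q : E, fderiv ℝ m q et
      + (fderiv ℝ v q ey * m q + v q * fderiv ℝ m q ey
        - (fderiv ℝ u q ey * n q + u q * fderiv ℝ n q ey))
      + u q * (fderiv ℝ m q ex + fderiv ℝ n q ey) = 0 := by
    intro q
    have e1 : fderiv ℝ (fun r => v r * m r - u r * n r) q ey
        = fderiv ℝ v q ey * m q + v q * fderiv ℝ m q ey
          - (fderiv ℝ u q ey * n q + u q * fderiv ℝ n q ey) := by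
      erw [pd_sub ((dv q).mul (dm q)) ((du q).mul (dn q)),
        pd_mul (dv q) (dm q), pd_mul (du q) (dn q)]
    have h2 := h q
    rw [e1] at h2
    linarith [h2]
  have d1 : Differentiable ℝ (fun q => fderiv ℝ m q et) := diff_pd hm et
  have d2 : Differentiable ℝ (fun q => fderiv ℝ v q ey * m q + v q * fderiv ℝ m q ey
      - (fderiv ℝ u q ey * n q + u q * fderiv ℝ n q ey)) :=
    (((diff_pd hv ey).mul dm).add (dv.mul (diff_pd hm ey))).sub
      (((diff_pd hu ey).mul dn).add (du.mul (diff_pd hn ey)))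
  have d3 : Differentiable ℝ (fun q => u q * (fderiv ℝ m q ex + fderiv ℝ n q ey)) :=
    du.mul ((diff_pd hm ex).add (diff_pd hn ey))
  have hΦ : fderiv ℝ (fun q => fderiv ℝ m q et
      + (fderiv ℝ v q ey * m q + v q * fderiv ℝ m q ey
        - (fderiv ℝ u q ey * n q + u q * fderiv ℝ n q ey))
      + u q * (fderiv ℝ m q ex + fderiv ℝ n q ey)) p ex = 0 := by
    rw [show (fun q : E => fderiv ℝ m q et
      + (fderiv ℝ v q ey * m q + v q * fderiv ℝ m q ey
        - (fderiv ℝ u q ey * n q + u q * fderiv ℝ n q ey))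
      + u q * (fderiv ℝ m q ex + fderiv ℝ n q ey)) = (fun _ : E => (0:ℝ)) from funext h']
    simp
  -- expand the hypothesis derivative
  erw [pd_add ((d1 p).add (d2 p)) (d3 p), pd_add (d1 p) (d2 p),
    pd_sub ((((diff_pd hv ey).mul dm).add (dv.mul (diff_pd hm ey))) p)
      ((((diff_pd hu ey).mul dn).add (du.mul (diff_pd hn ey))) p),
    pd_add (((diff_pd hv ey).mul dm) p) ((dv.mul (diff_pd hm ey)) p),
    pd_add (((diff_pd hu ey).mul dn) p) ((du.mul (diff_pd hn ey)) p),
    pd_mul ((diff_pd hv ey) p) (dm p), pd_mul (dv p) ((diff_pd hm ey) p),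
    pd_mul ((diff_pd hu ey) p) (dn p), pd_mul (du p) ((diff_pd hn ey) p),
    pd_mul (du p) (((diff_pd hm ex).add (diff_pd hn ey)) p),
    pd_add ((diff_pd hm ex) p) ((diff_pd hn ey) p)] at hΦ
  -- expand the goal
  erw [pd_sub ((du.mul (diff_pd hm ex)) p) ((dn.mul (diff_pd hu ey)) p),
    pd_mul (du p) ((diff_pd hm ex) p), pd_mul (dn p) ((diff_pd hu ey) p),
    pd_add ((dv.mul (diff_pd hm ex)) p) ((dm.mul (diff_pd hv ex)) p),
    pd_mul (dv p) ((diff_pd hm ex) p), pd_mul (dm p) ((diff_pd hv ex) p),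
    pd_comm hm p et ex, pd_comm hm p ey ex, pd_comm hv p ey ex]
  simp only [Pi.add_apply] at hΦ
  linarith [hΦ]


/-- Evolution equations (2.8)/(3.3) for the auxiliary variables `A = ∂_x m` and `B = ∂_y n`,
obtained by differentiating the Godunov–Powell modified induction equations in `x` and `y`. -/
theorem auxiliary_variable_evolution
    (u v m n : ℝ × ℝ × ℝ → ℝ)
    (hu : ContDiff ℝ 2 u) (hv : ContDiff ℝ 2 v)
    (hm : ContDiff ℝ 2 m) (hn : ContDiff ℝ 2 n) :
    ((∀ p : ℝ × ℝ × ℝ, pdt m p + pdy (fun q => v q * m q - u q * n q) p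
        = -(u p) * (pdx m p + pdy n p)) →
      ∀ p : ℝ × ℝ × ℝ,
        pdt (fun q => pdx m q) p
          + pdx (fun q => u q * pdx m q - n q * pdy u q) p
          + pdy (fun q => v q * pdx m q + m q * pdx v q) p = 0)
    ∧ ((∀ p : ℝ × ℝ × ℝ, pdt n p + pdx (fun q => u q * n q - v q * m q) p
        = -(v p) * (pdx m p + pdy n p)) →
      ∀ p : ℝ × ℝ × ℝ,
        pdt (fun q => pdy n q) p
          + pdx (fun q => u q * pdy n q + n q * pdy u q) p
          + pdy (fun q => v q * pdy n q - m q * pdx v q) p = 0) := by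
  constructor
  · intro h p
    simp only [pdt, pdx, pdy] at h ⊢
    exact key u v m n hu hv hm hn (1,0,0) (0,1,0) (0,0,1) h p
  · intro h p
    simp only [pdt, pdx, pdy] at h ⊢
    have h' : ∀ p : ℝ × ℝ × ℝ, fderiv ℝ n p (0,0,1)
        + fderiv ℝ (fun q => u q * n q - v q * m q) p (1,0,0)
        = -(v p) * (fderiv ℝ n p (0,1,0) + fderiv ℝ m p (1,0,0)) := by
      intro q
      have := h q
      linear_combination this
    have := key v u n m hv hu hn hm (0,1,0) (1,0,0) (0,0,1) h' p
    linarith [this]
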